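/- Let g¹, g² ∈ {2,…,T} ∪ {∞} with g := min(g¹,g²) finite, and let t with g ≤ t ≤ T; assume P(W=1) > 0 and P(D_t=0, G¹≠g¹, G²≠g²) > 0, and that the realized outcomes Y_t, Y_{g−1} are integrable. Then the outcome control functions coincide: there are versions of m^CS(X) := E_{P_W}[Y_t − Y_{g−1} | X, D_t=0, G≠g] and m(X) := E[Y_t − Y_{g−1} | X, D_t=0, G¹≠g¹, G²≠g²] that are equal P-almost surely on the event {D_t=0, G¹≠g¹, G²≠g²}. -/

import Mathlib

/- Two-event staggered Difference-in-Differences setup (Callaway–Sant'Anna with a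
confounding event).  Cohorts take values in `{2,…,T} ∪ {∞} ⊆ ℕ∞`; the potential-outcome
index `0 : ℕ∞` codes "never treated by that event". -/

open MeasureTheory ProbabilityTheory

noncomputable section

namespace TwoEventDiD

variable {Ω : Type*} [MeasurableSpace Ω]

/-- Expectation of `Z` conditional on the event `A`: `E[Z | A]`. -/
def cE (μ : Measure Ω) (A : Set Ω) (Z : Ω → ℝ) : ℝ := ∫ ω, Z ω ∂(μ[|A])

/-- Probability of `B` conditional on the event `A`: `P(B | A)`. -/
def cP (μ : Measure Ω) (A B : Set Ω) : ℝ := (μ[|A] B).toReal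

/-- `g` lies in `{2,…,T} ∪ {∞}`. -/
def InCohort (T : ℕ) (g : ℕ∞) : Prop := g = ⊤ ∨ ((2 : ℕ∞) ≤ g ∧ g ≤ (T : ℕ∞))

/-- Realized outcome `Y_t := Y_t(G¹,G²)`. -/
def Yr (G1 G2 : Ω → ℕ∞) (Y : ℕ → ℕ∞ → ℕ∞ → Ω → ℝ) (t : ℕ) : Ω → ℝ :=
  fun ω => Y t (G1 ω) (G2 ω) ω

/-- Double-group-time average treatment effect
`ATT(g¹,g²,t) = E[Y_t(g¹,g²) − Y_t(0,0) | G¹=g¹, G²=g²]`. -/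
def ATT (μ : Measure Ω) (G1 G2 : Ω → ℕ∞) (Y : ℕ → ℕ∞ → ℕ∞ → Ω → ℝ)
    (g1 g2 : ℕ∞) (t : ℕ) : ℝ :=
  cE μ {ω | G1 ω = g1 ∧ G2 ω = g2} fun ω => Y t g1 g2 ω - Y t 0 0 ω

/-- Target (event-1) treatment effect
`ATT¹(g¹,g²,t) = E[Y_t(g¹,0) − Y_t(0,0) | G¹=g¹, G²=g²]`. -/
def ATT1 (μ : Measure Ω) (G1 G2 : Ω → ℕ∞) (Y : ℕ → ℕ∞ → ℕ∞ → Ω → ℝ)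
    (g1 g2 : ℕ∞) (t : ℕ) : ℝ :=
  cE μ {ω | G1 ω = g1 ∧ G2 ω = g2} fun ω => Y t g1 0 ω - Y t 0 0 ω

/-- Confounding (event-2) treatment effect
`ATT²(g¹,g²,t) = E[Y_t(0,g²) − Y_t(0,0) | G¹=g¹, G²=g²]`. -/
def ATT2 (μ : Measure Ω) (G1 G2 : Ω → ℕ∞) (Y : ℕ → ℕ∞ → ℕ∞ → Ω → ℝ)
    (g1 g2 : ℕ∞) (t : ℕ) : ℝ :=
  cE μ {ω | G1 ω = g1 ∧ G2 ω = g2} fun ω => Y t 0 g2 ω - Y t 0 0 ω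

/-- No Anticipation (unconditional version): before `max(g¹,g²)` the mean outcome of
cohort `(g¹,g²)` coincides with the appropriate less-treated potential outcome. -/
def NoAnticipation (μ : Measure Ω) (G1 G2 : Ω → ℕ∞) (Y : ℕ → ℕ∞ → ℕ∞ → Ω → ℝ)
    (T : ℕ) : Prop :=
  ∀ g1 g2 : ℕ∞, InCohort T g1 → InCohort T g2 →
    0 < μ {ω | G1 ω = g1 ∧ G2 ω = g2} →
    ∀ t : ℕ, 1 ≤ t → (t : ℕ∞) < max g1 g2 →
      ((t : ℕ∞) < min g1 g2 →
        cE μ {ω | G1 ω = g1 ∧ G2 ω = g2} (Y t g1 g2)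
          = cE μ {ω | G1 ω = g1 ∧ G2 ω = g2} (Y t 0 0)) ∧
      (g1 ≤ (t : ℕ∞) ∧ (t : ℕ∞) < g2 →
        cE μ {ω | G1 ω = g1 ∧ G2 ω = g2} (Y t g1 g2)
          = cE μ {ω | G1 ω = g1 ∧ G2 ω = g2} (Y t g1 0)) ∧
      (g2 ≤ (t : ℕ∞) ∧ (t : ℕ∞) < g1 →
        cE μ {ω | G1 ω = g1 ∧ G2 ω = g2} (Y t g1 g2)
          = cE μ {ω | G1 ω = g1 ∧ G2 ω = g2} (Y t 0 g2))


/-- The σ-algebra `σ(X)` generated by the covariates. -/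
def mX {K : ℕ} (X : Ω → Fin K → ℝ) : MeasurableSpace Ω :=
  MeasurableSpace.comap X inferInstance

/-- Conditional No Anticipation (conditional on covariates `X`). -/
def CondNoAnticipation (μ : Measure Ω) (G1 G2 : Ω → ℕ∞) (Y : ℕ → ℕ∞ → ℕ∞ → Ω → ℝ)
    (T : ℕ) {K : ℕ} (X : Ω → Fin K → ℝ) : Prop :=
  ∀ g1 g2 : ℕ∞, InCohort T g1 → InCohort T g2 →
    0 < μ {ω | G1 ω = g1 ∧ G2 ω = g2} →
    ∀ t : ℕ, 1 ≤ t → (t : ℕ∞) < max g1 g2 →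
      ((t : ℕ∞) < min g1 g2 →
        (μ[|{ω | G1 ω = g1 ∧ G2 ω = g2}])[Y t g1 g2 | mX X]
          =ᵐ[μ[|{ω | G1 ω = g1 ∧ G2 ω = g2}]]
        (μ[|{ω | G1 ω = g1 ∧ G2 ω = g2}])[Y t 0 0 | mX X]) ∧
      (g1 ≤ (t : ℕ∞) ∧ (t : ℕ∞) < g2 →
        (μ[|{ω | G1 ω = g1 ∧ G2 ω = g2}])[Y t g1 g2 | mX X]
          =ᵐ[μ[|{ω | G1 ω = g1 ∧ G2 ω = g2}]]
        (μ[|{ω | G1 ω = g1 ∧ G2 ω = g2}])[Y t g1 0 | mX X]) ∧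
      (g2 ≤ (t : ℕ∞) ∧ (t : ℕ∞) < g1 →
        (μ[|{ω | G1 ω = g1 ∧ G2 ω = g2}])[Y t g1 g2 | mX X]
          =ᵐ[μ[|{ω | G1 ω = g1 ∧ G2 ω = g2}]]
        (μ[|{ω | G1 ω = g1 ∧ G2 ω = g2}])[Y t 0 g2 | mX X])

/-- Conditional parallel trends with respect to the never-treated: a common measurable
function of the covariates is a version of both conditional mean untreated trends. -/
def CondPTNever (μ : Measure Ω) (G1 G2 : Ω → ℕ∞) (Y : ℕ → ℕ∞ → ℕ∞ → Ω → ℝ)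
    (T : ℕ) {K : ℕ} (X : Ω → Fin K → ℝ) : Prop :=
  ∀ g1 g2 : ℕ∞, InCohort T g1 → InCohort T g2 → ¬(g1 = ⊤ ∧ g2 = ⊤) →
    0 < μ {ω | G1 ω = g1 ∧ G2 ω = g2} →
    0 < μ {ω | G1 ω = ⊤ ∧ G2 ω = ⊤} →
    ∀ t : ℕ, min g1 g2 ≤ (t : ℕ∞) → t ≤ T →
      ∃ h : (Fin K → ℝ) → ℝ, Measurable h ∧
        (fun ω => h (X ω))
          =ᵐ[μ[|{ω | G1 ω = g1 ∧ G2 ω = g2}]]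
          (μ[|{ω | G1 ω = g1 ∧ G2 ω = g2}])[fun ω => Y t 0 0 ω - Y (t - 1) 0 0 ω | mX X] ∧
        (fun ω => h (X ω))
          =ᵐ[μ[|{ω | G1 ω = ⊤ ∧ G2 ω = ⊤}]]
          (μ[|{ω | G1 ω = ⊤ ∧ G2 ω = ⊤}])[fun ω => Y t 0 0 ω - Y (t - 1) 0 0 ω | mX X]

/-- Conditional parallel trends with respect to the not-yet-treated. -/
def CondPTNyt (μ : Measure Ω) (G1 G2 : Ω → ℕ∞) (Y : ℕ → ℕ∞ → ℕ∞ → Ω → ℝ)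
    (T : ℕ) {K : ℕ} (X : Ω → Fin K → ℝ) : Prop :=
  ∀ g1 g2 : ℕ∞, InCohort T g1 → InCohort T g2 → ¬(g1 = ⊤ ∧ g2 = ⊤) →
    0 < μ {ω | G1 ω = g1 ∧ G2 ω = g2} →
    ∀ s t : ℕ, min g1 g2 ≤ (t : ℕ∞) → t ≤ s → s ≤ T →
      0 < μ {ω | ¬ G1 ω ≤ (s : ℕ∞) ∧ ¬ G2 ω ≤ (s : ℕ∞) ∧ G1 ω ≠ g1 ∧ G2 ω ≠ g2} →
      ∃ h : (Fin K → ℝ) → ℝ, Measurable h ∧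
        (fun ω => h (X ω))
          =ᵐ[μ[|{ω | G1 ω = g1 ∧ G2 ω = g2}]]
          (μ[|{ω | G1 ω = g1 ∧ G2 ω = g2}])[fun ω => Y t 0 0 ω - Y (t - 1) 0 0 ω | mX X] ∧
        (fun ω => h (X ω))
          =ᵐ[μ[|{ω | ¬ G1 ω ≤ (s : ℕ∞) ∧ ¬ G2 ω ≤ (s : ℕ∞) ∧ G1 ω ≠ g1 ∧ G2 ω ≠ g2}]]
          (μ[|{ω | ¬ G1 ω ≤ (s : ℕ∞) ∧ ¬ G2 ω ≤ (s : ℕ∞) ∧ G1 ω ≠ g1 ∧ G2 ω ≠ g2}])[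
            fun ω => Y t 0 0 ω - Y (t - 1) 0 0 ω | mX X]


/-- The event `{W = 1} = {G ≠ g} ∪ {G¹=g¹, G²=g²}` selecting the cohort of interest. -/
def Wset (G1 G2 : Ω → ℕ∞) (g1 g2 : ℕ∞) (g : ℕ) : Set Ω :=
  {ω | min (G1 ω) (G2 ω) ≠ (g : ℕ∞) ∨ (G1 ω = g1 ∧ G2 ω = g2)}

/-- Two-event propensity-score conditioning event
`A = {G¹=g¹, G²=g²} ∪ ({D_t=0} ∩ {G¹=g¹, G²=g²}ᶜ)`. -/
def evA (G1 G2 : Ω → ℕ∞) (g1 g2 : ℕ∞) (t : ℕ) : Set Ω :=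
  {ω | (G1 ω = g1 ∧ G2 ω = g2) ∨
    (¬ min (G1 ω) (G2 ω) ≤ (t : ℕ∞) ∧ ¬(G1 ω = g1 ∧ G2 ω = g2))}

/-- Combined-event propensity-score conditioning event
`A^CS = {G=g} ∪ ({D_t=0} ∩ {G≠g})`. -/
def evACS (G1 G2 : Ω → ℕ∞) (g : ℕ) (t : ℕ) : Set Ω :=
  {ω | min (G1 ω) (G2 ω) = (g : ℕ∞) ∨
    (¬ min (G1 ω) (G2 ω) ≤ (t : ℕ∞) ∧ min (G1 ω) (G2 ω) ≠ (g : ℕ∞))}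

/-- The comparison-group event `{D_t = 0} ∩ {(G¹,G²) ≠ (g¹,g²)}` for the two events. -/
def evComp (G1 G2 : Ω → ℕ∞) (g1 g2 : ℕ∞) (t : ℕ) : Set Ω :=
  {ω | ¬ min (G1 ω) (G2 ω) ≤ (t : ℕ∞) ∧ ¬(G1 ω = g1 ∧ G2 ω = g2)}

/-- The comparison-group event `{D_t = 0} ∩ {G ≠ g}` for the combined event. -/
def evCompCS (G1 G2 : Ω → ℕ∞) (g : ℕ) (t : ℕ) : Set Ω :=
  {ω | ¬ min (G1 ω) (G2 ω) ≤ (t : ℕ∞) ∧ min (G1 ω) (G2 ω) ≠ (g : ℕ∞)}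

/-- Inverse-probability weight `h(X)·1_C / (1 − h(X))` built from a propensity score
`h ∘ X` and a comparison event `C`. -/
def ipw {K : ℕ} (X : Ω → Fin K → ℝ) (h : (Fin K → ℝ) → ℝ) (C : Set Ω) : Ω → ℝ :=
  fun ω => h (X ω) * C.indicator (fun _ => (1 : ℝ)) ω / (1 - h (X ω))

end TwoEventDiD

open TwoEventDiD

/-- Lemma 2, outcome-regression equivalence: the two-event and
combined-event outcome control functions coincide a.s. on the comparison event. -/
theorem control_function_equivalence
    {Ω : Type*} [MeasurableSpace Ω] (μ : Measure Ω) [IsProbabilityMeasure μ]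
    (T : ℕ) (hT : 2 ≤ T)
    (G1 G2 : Ω → ℕ∞) (Y : ℕ → ℕ∞ → ℕ∞ → Ω → ℝ)
    (hG1mem : ∀ ω, InCohort T (G1 ω)) (hG2mem : ∀ ω, InCohort T (G2 ω))
    (hmG1 : ∀ g : ℕ∞, MeasurableSet {ω | G1 ω = g})
    (hmG2 : ∀ g : ℕ∞, MeasurableSet {ω | G2 ω = g})
    (hYint : ∀ (t : ℕ) (g1 g2 : ℕ∞), Integrable (Y t g1 g2) μ)
    (hYtop1 : ∀ (t : ℕ) (g2 : ℕ∞), Y t ⊤ g2 = Y t 0 g2)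
    (hYtop2 : ∀ (t : ℕ) (g1 : ℕ∞), Y t g1 ⊤ = Y t g1 0)
    {K : ℕ} (X : Ω → Fin K → ℝ) (hX : Measurable X)
    (g1 g2 : ℕ∞) (hg1 : InCohort T g1) (hg2 : InCohort T g2)
    (g : ℕ) (hg : (g : ℕ∞) = min g1 g2)
    (t : ℕ) (hgt : g ≤ t) (htT : t ≤ T)
    (hW : 0 < μ (Wset G1 G2 g1 g2 g))
    (hYrt : Integrable (Yr G1 G2 Y t) μ)
    (hYrb : Integrable (Yr G1 G2 Y (g - 1)) μ)
    (hB : 0 < μ (evComp G1 G2 g1 g2 t)) :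
    ∃ h1 h2 : (Fin K → ℝ) → ℝ, Measurable h1 ∧ Measurable h2 ∧
      (fun ω => h1 (X ω))
        =ᵐ[(μ[|Wset G1 G2 g1 g2 g])[|evCompCS G1 G2 g t]]
        ((μ[|Wset G1 G2 g1 g2 g])[|evCompCS G1 G2 g t])[
          fun ω => Yr G1 G2 Y t ω - Yr G1 G2 Y (g - 1) ω | mX X] ∧
      (fun ω => h2 (X ω))
        =ᵐ[μ[|evComp G1 G2 g1 g2 t]]
        (μ[|evComp G1 G2 g1 g2 t])[
          fun ω => Yr G1 G2 Y t ω - Yr G1 G2 Y (g - 1) ω | mX X] ∧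
      ∀ᵐ ω ∂μ, ω ∈ evComp G1 G2 g1 g2 t → h1 (X ω) = h2 (X ω) := by
  classical
  set S : Set Ω := evComp G1 G2 g1 g2 t with hS
  -- measurability of basic sets
  have hmin_eq : ∀ c : ℕ∞, MeasurableSet {ω | min (G1 ω) (G2 ω) = c} := by
    intro c
    have : {ω | min (G1 ω) (G2 ω) = c}
        = ⋃ (p : ℕ∞ × ℕ∞) (_ : min p.1 p.2 = c),
            ({ω | G1 ω = p.1} ∩ {ω | G2 ω = p.2}) := by
      ext ω
      constructor
      · intro h
        exact Set.mem_iUnion.2 ⟨(G1 ω, G2 ω), Set.mem_iUnion.2 ⟨h, ⟨rfl, rfl⟩⟩⟩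
      · intro h
        obtain ⟨p, hp⟩ := Set.mem_iUnion.1 h
        obtain ⟨hpc, h1, h2⟩ := Set.mem_iUnion.1 hp
        simp only [Set.mem_setOf_eq] at h1 h2 ⊢
        rw [h1, h2]; exact hpc
    rw [this]
    exact MeasurableSet.iUnion fun p => MeasurableSet.iUnion fun _ =>
      (hmG1 _).inter (hmG2 _)
  have hmin_le : MeasurableSet {ω | min (G1 ω) (G2 ω) ≤ (t : ℕ∞)} := by
    have : {ω | min (G1 ω) (G2 ω) ≤ (t : ℕ∞)}
        = ⋃ (c : ℕ∞) (_ : c ≤ (t : ℕ∞)), {ω | min (G1 ω) (G2 ω) = c} := by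
      ext ω
      constructor
      · intro h
        exact Set.mem_iUnion.2 ⟨min (G1 ω) (G2 ω), Set.mem_iUnion.2 ⟨h, rfl⟩⟩
      · intro h
        obtain ⟨c, hc⟩ := Set.mem_iUnion.1 h
        obtain ⟨hct, hc'⟩ := Set.mem_iUnion.1 hc
        simp only [Set.mem_setOf_eq] at hc' ⊢
        rw [hc']; exact hct
    rw [this]
    exact MeasurableSet.iUnion fun c => MeasurableSet.iUnion fun _ => hmin_eq c
  have hmS : MeasurableSet S :=
    hmin_le.compl.inter ((hmG1 g1).inter (hmG2 g2)).compl
  have hmW : MeasurableSet (Wset G1 G2 g1 g2 g) :=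
    (hmin_eq (g : ℕ∞)).compl.union ((hmG1 g1).inter (hmG2 g2))
  have hmCS : MeasurableSet (evCompCS G1 G2 g t) :=
    hmin_le.compl.inter (hmin_eq (g : ℕ∞)).compl
  have hgt' : (g : ℕ∞) ≤ (t : ℕ∞) := by exact_mod_cast hgt
  -- the two comparison events coincide
  have hCS_eq : evCompCS G1 G2 g t = S := by
    ext ω
    simp only [evCompCS, evComp, hS, Set.mem_setOf_eq]
    constructor
    · rintro ⟨hnle, -⟩
      refine ⟨hnle, fun hc => hnle ?_⟩
      rw [hc.1, hc.2, ← hg]; exact hgt'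
    · rintro ⟨hnle, hne⟩
      refine ⟨hnle, fun hc => hnle ?_⟩
      rw [hc]; exact hgt'
  -- the comparison event is inside the W-selection event
  have hSW : S ⊆ Wset G1 G2 g1 g2 g := by
    intro ω hω
    obtain ⟨hnle, -⟩ := hω
    exact Or.inl fun hc => hnle (by rw [hc]; exact hgt')
  -- the iterated conditional measure equals conditioning on S
  have hmeas_eq : (μ[|Wset G1 G2 g1 g2 g])[|evCompCS G1 G2 g t] = μ[|S] := by
    rw [cond_cond_eq_cond_inter hmW hmCS, hCS_eq,
      Set.inter_eq_self_of_subset_right hSW]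
  -- S has positive (nonzero) measure
  have hSne : μ S ≠ 0 := hB.ne'
  haveI : IsProbabilityMeasure (μ[|S]) :=
    cond_isProbabilityMeasure_of_finite hSne (measure_ne_top μ S)
  -- the outcome difference function and its integrability under the conditional measure
  set f : Ω → ℝ := fun ω => Yr G1 G2 Y t ω - Yr G1 G2 Y (g - 1) ω with hf
  have hfint : Integrable f (μ[|S]) := by
    have h0 : Integrable f μ := hYrt.sub hYrb
    rw [ProbabilityTheory.cond]
    exact (h0.restrict).smul_measure (ENNReal.inv_ne_top.2 hSne)
  -- conditional expectation as an integral against the conditional distribution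
  have hcond := condExp_ae_eq_integral_condDistrib'
    (μ := μ[|S]) (X := X) (Y := f) hX hfint
  set h : (Fin K → ℝ) → ℝ :=
    fun x => ∫ y, y ∂(condDistrib f X (μ[|S]) x) with hh
  have hmeas_h : Measurable h := by
    have : StronglyMeasurable fun x => ∫ y, y ∂(condDistrib f X (μ[|S]) x) := by
      exact MeasureTheory.StronglyMeasurable.integral_kernel_prod_right
        (κ := condDistrib f X (μ[|S])) (f := fun (_ : Fin K → ℝ) (y : ℝ) => y)
        measurable_snd.stronglyMeasurable
    exact this.measurable
  have hver : (fun ω => h (X ω)) =ᵐ[μ[|S]] (μ[|S])[f | mX X] := by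
    exact hcond.symm
  refine ⟨h, h, hmeas_h, hmeas_h, ?_, ?_, ?_⟩
  · rw [hmeas_eq]; exact hver
  · exact hver
  · filter_upwards with ω _ using rfl
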